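/- Let T be the weighted shift on l² with positive weights (a_j). If both T and its mean transform M(T) (the weighted shift with weights (a_j + a_{j+1})/2) are 2-isometries, then T is an isometry (a_j = 1 for all j); in particular T = Δ(T) = M(T). -/

import Mathlib

noncomputable section

/-- The Hilbert space `ℓ²(ℕ, ℂ)`. -/
abbrev Ell2 := lp (fun _ : ℕ => ℂ) 2

/-- The canonical orthonormal basis of `ℓ²` (indexed from `0`; the paper's index `j ≥ 1`
corresponds to our index `j - 1`). -/
noncomputable def e (j : ℕ) : Ell2 := lp.single 2 j 1

/-- `T` is an `m`-isometry: `∑_{k=0}^m (-1)^k C(m,k) ‖T^k x‖² = 0` for all `x`. -/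
def IsMIsometry (T : Ell2 →L[ℂ] Ell2) (m : ℕ) : Prop :=
  ∀ x : Ell2,
    ∑ k ∈ Finset.range (m + 1), (-1 : ℝ) ^ k * (m.choose k : ℝ) * ‖(T ^ k) x‖ ^ 2 = 0


private lemma step_lt (s : ℕ → ℝ) (hs : ∀ j, 0 < s j)
    (h : ∀ j, s (j+1) * s j - 2 * s j + 1 = 0) {j : ℕ} (hj : s j < 1) :
    s (j+1) < 1 ∧ 1/(s (j+1) - 1) = 1/(s j - 1) + 1 := by
  have h0 := hs j
  have key : (s (j+1) - 1) * s j = s j - 1 := by linear_combination h j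
  have hlt : s (j+1) < 1 := by nlinarith
  refine ⟨hlt, ?_⟩
  have h1 : s j - 1 ≠ 0 := ne_of_lt (by linarith)
  have h2 : s (j+1) - 1 ≠ 0 := ne_of_lt (by linarith)
  field_simp
  linear_combination -h j

private lemma step_gt (s : ℕ → ℝ) (hs : ∀ j, 0 < s j)
    (h : ∀ j, s (j+1) * s j - 2 * s j + 1 = 0) {j : ℕ} (hj : 1 < s j) :
    1 < s (j+1) ∧ 1/(s (j+1) - 1) = 1/(s j - 1) + 1 := by
  have h0 := hs j
  have key : (s (j+1) - 1) * s j = s j - 1 := by linear_combination h j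
  have hlt : 1 < s (j+1) := by nlinarith
  refine ⟨hlt, ?_⟩
  have h1 : s j - 1 ≠ 0 := ne_of_gt (by linarith)
  have h2 : s (j+1) - 1 ≠ 0 := ne_of_gt (by linarith)
  field_simp
  linear_combination -h j

private lemma ge_one (s : ℕ → ℝ) (hs : ∀ j, 0 < s j)
    (h : ∀ j, s (j+1) * s j - 2 * s j + 1 = 0) (j : ℕ) : 1 ≤ s j := by
  by_contra hc
  push_neg at hc
  have chain : ∀ n : ℕ, s (j+n) < 1 ∧ 1/(s (j+n) - 1) = 1/(s j - 1) + n := by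
    intro n
    induction n with
    | zero => simpa using hc
    | succ n ih =>
      obtain ⟨h1, h2⟩ := step_lt s hs h ih.1
      refine ⟨by rw [show j + (n+1) = (j+n)+1 by ring]; exact h1, ?_⟩
      rw [show j + (n+1) = (j+n)+1 by ring, h2, ih.2]
      push_cast; ring
  set u := 1/(s j - 1) with hu
  have hsj0 := hs j
  have hdj : s j - 1 < 0 := by linarith
  have hu_neg : u < 0 := one_div_neg.mpr hdj
  set n := ⌊-u⌋₊ with hn
  have hn1 : (n:ℝ) ≤ -u := Nat.floor_le (by linarith)
  have hn2 : -u < n + 1 := Nat.lt_floor_add_one _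
  obtain ⟨h1, h2⟩ := chain n
  have hd : s (j+n) - 1 < 0 := by linarith
  have hprod : (1:ℝ) = (u + n) * (s (j+n) - 1) :=
    (div_eq_iff (by intro hh; rw [hh] at hd; exact lt_irrefl _ hd : s (j+n) - 1 ≠ 0)).mp h2
  have hsp := hs (j+n)
  nlinarith [mul_pos (show (0:ℝ) < u + n + 1 by linarith) (show (0:ℝ) < 1 - s (j+n) by linarith)]

private lemma chain_gt (s : ℕ → ℝ) (hs : ∀ j, 0 < s j)
    (h : ∀ j, s (j+1) * s j - 2 * s j + 1 = 0) {k : ℕ} (hk : 1 < s k) :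
    ∀ n : ℕ, 1 < s (k+n) ∧ 1/(s (k+n) - 1) = 1/(s k - 1) + n := by
  intro n
  induction n with
  | zero => simpa using hk
  | succ n ih =>
    obtain ⟨h1, h2⟩ := step_gt s hs h ih.1
    refine ⟨by rw [show k + (n+1) = (k+n)+1 by ring]; exact h1, ?_⟩
    rw [show k + (n+1) = (k+n)+1 by ring, h2, ih.2]
    push_cast; ring


private lemma upper_bound (A B Q P u g : ℝ) (hA : (A-1)*u = 1) (hB : (B-1)*(u+1) = 1)
    (hQ : (Q-1)*g = 1) (hP2 : P^2 = A*B) (hPQ : P ≤ Q) (hPpos : 0 < P)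
    (hu : 0 < u) (hg : 0 < g) : g < u + 1/2 := by
  have hP2' : P^2*(u*(u+1)) = (u+1)*(u+2) := by
    linear_combination u*(u+1)*hP2 + B*(u+1)*hA + (u+1)*hB
  have h1' : (P^2*(2*u+1)^2 - (2*u+3)^2) * (u*(u+1)) = 2*(u+1) := by
    linear_combination (2*u+1)^2 * hP2'
  have hu1 : (0:ℝ) < u + 1 := by linarith
  have h1 : (2*u+3)^2 < P^2*(2*u+1)^2 := by
    by_contra hcon
    push_neg at hcon
    nlinarith [h1', mul_pos hu hu1]
  have hPgt : (2*u+3) < P * (2*u+1) := by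
    nlinarith [h1, mul_pos hPpos (show (0:ℝ) < 2*u+1 by linarith)]
  have hQgt : 2 < (Q - 1)*(2*u+1) := by
    have := mul_le_mul_of_nonneg_right hPQ (show (0:ℝ) ≤ 2*u+1 by linarith)
    nlinarith
  have h6 : (Q-1)*(2*u+1)*g = 2*u+1 := by linear_combination (2*u+1)*hQ
  have h5 : 2*g < (Q-1)*(2*u+1)*g := mul_lt_mul_of_pos_right hQgt hg
  linarith

private lemma lower_bound (A B Q x gn : ℝ) (hA : (A-1)*x = 1) (hB : (B-1)*(x+1) = 1)
    (hQ : (Q-1)*gn = 1) (hQAM : Q ≤ (A+B)/2) (hx : 0 < x) (hgn : 0 ≤ gn) :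
    2*x*(x+1) ≤ gn*(2*x+1) := by
  have hQ1 : Q - 1 ≤ ((A-1)+(B-1))/2 := by linarith
  have h7 : (Q-1)*(2*x*(x+1)) ≤ ((A-1)+(B-1))/2*(2*x*(x+1)) :=
    mul_le_mul_of_nonneg_right hQ1 (by nlinarith)
  have h8 : ((A-1)+(B-1))/2*(2*x*(x+1)) = 2*x+1 := by
    linear_combination (x+1)*hA + x*hB
  have h9 : (gn)*((Q-1)*(2*x*(x+1))) ≤ (gn)*(2*x+1) :=
    mul_le_mul_of_nonneg_left (by linarith) hgn
  have h10 : (gn)*((Q-1)*(2*x*(x+1))) = 2*x*(x+1) := by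
    linear_combination (2*x*(x+1)) * hQ
  linarith

private lemma weights_eq_one (w : ℕ → ℝ) (hw : ∀ j, 0 < w j)
    (rT : ∀ j, (w (j+1))^2 * (w j)^2 - 2*(w j)^2 + 1 = 0)
    (rM : ∀ j, ((w (j+1) + w (j+2))/2)^2 * ((w j + w (j+1))/2)^2
        - 2*((w j + w (j+1))/2)^2 + 1 = 0) (k : ℕ) : w k = 1 := by
  have hs : ∀ j, 0 < (fun j => (w j)^2) j := fun j => pow_pos (hw j) 2
  have ht : ∀ j, 0 < (fun j => ((w j + w (j+1))/2)^2) j := fun j => by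
    have h1 := hw j; have h2 := hw (j+1)
    exact pow_pos (by linarith) 2
  have hrs : ∀ j, (fun j => (w j)^2) (j+1) * (fun j => (w j)^2) j
      - 2 * (fun j => (w j)^2) j + 1 = 0 := fun j => by simpa using rT j
  have hrt : ∀ j, (fun j => ((w j + w (j+1))/2)^2) (j+1) * (fun j => ((w j + w (j+1))/2)^2) j
      - 2 * (fun j => ((w j + w (j+1))/2)^2) j + 1 = 0 := fun j => by simpa using rM j
  have hge : ∀ j, 1 ≤ w j := by
    intro j
    have h1 : 1 ≤ (w j)^2 := ge_one _ hs hrs j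
    nlinarith [hw j]
  by_contra hne
  have hk : 1 < w k := lt_of_le_of_ne (hge k) (Ne.symm hne)
  have hsk : 1 < (w k)^2 := by nlinarith
  have chS := chain_gt _ hs hrs (k := k) hsk
  have hwgt : ∀ n : ℕ, 1 < w (k+n) := by
    intro n
    have h1 : 1 < (w (k+n))^2 := (chS n).1
    nlinarith [hw (k+n)]
  have htk : 1 < ((w k + w (k+1))/2)^2 := by
    have h1 := hwgt 0
    have h2 := hwgt 1
    simp only [Nat.add_zero] at h1
    nlinarith
  have chT := chain_gt _ ht hrt (k := k) htk
  obtain ⟨u, hu⟩ : ∃ x : ℝ, x = 1/((w k)^2 - 1) := ⟨_, rfl⟩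
  obtain ⟨g, hg⟩ : ∃ x : ℝ, x = 1/(((w k + w (k+1))/2)^2 - 1) := ⟨_, rfl⟩
  have hu_pos : 0 < u := by rw [hu]; exact one_div_pos.mpr (by linarith)
  have hg_pos : 0 < g := by rw [hg]; exact one_div_pos.mpr (by linarith)
  have prodS : ∀ n : ℕ, ((w (k+n))^2 - 1) * (u + n) = 1 := by
    intro n
    have h2 := (chS n).2
    have hgt : 1 < (w (k+n))^2 := (chS n).1
    have hne2 : (w (k+n))^2 - 1 ≠ 0 := ne_of_gt (by linarith)
    rw [← hu] at h2
    have h3 := (div_eq_iff hne2).mp h2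
    linarith [h3]
  have prodT : ∀ n : ℕ, (((w (k+n) + w (k+n+1))/2)^2 - 1) * (g + n) = 1 := by
    intro n
    have h2 := (chT n).2
    have hgt : 1 < ((w (k+n) + w (k+n+1))/2)^2 := (chT n).1
    have hne2 : ((w (k+n) + w (k+n+1))/2)^2 - 1 ≠ 0 := ne_of_gt (by linarith)
    rw [← hg] at h2
    have h3 := (div_eq_iff hne2).mp h2
    linarith [h3]
  -- upper bound at n = 0
  have hA0 : ((w k)^2 - 1) * u = 1 := by simpa using prodS 0
  have hB0 : ((w (k+1))^2 - 1) * (u+1) = 1 := by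
    have := prodS 1; push_cast at this; exact this
  have hQ0 : (((w k + w (k+1))/2)^2 - 1) * g = 1 := by simpa using prodT 0
  have hupper : g < u + 1/2 :=
    upper_bound ((w k)^2) ((w (k+1))^2) (((w k + w (k+1))/2)^2) (w k * w (k+1)) u g
      hA0 hB0 hQ0 (by ring)
      (by nlinarith [sq_nonneg (w k - w (k+1))])
      (mul_pos (hw k) (hw (k+1))) hu_pos hg_pos
  -- choose n large
  obtain ⟨δ, hδ⟩ : ∃ x : ℝ, x = u + 1/2 - g := ⟨_, rfl⟩
  have hδpos : 0 < δ := by rw [hδ]; linarith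
  have hn1 : 1/δ ≤ ((⌈1/δ⌉₊ : ℕ):ℝ) := Nat.le_ceil _
  have hδn : 1 ≤ δ * (⌈1/δ⌉₊ : ℕ) := by
    have h2 := mul_le_mul_of_nonneg_left hn1 (le_of_lt hδpos)
    rwa [mul_one_div, div_self (ne_of_gt hδpos)] at h2
  -- lower bound at n = ⌈1/δ⌉₊
  have hnnn : (0:ℝ) ≤ (⌈1/δ⌉₊ : ℕ) := Nat.cast_nonneg _
  have hlow : 2*(u+(⌈1/δ⌉₊:ℕ))*((u+(⌈1/δ⌉₊:ℕ))+1) ≤ (g+(⌈1/δ⌉₊:ℕ))*(2*(u+(⌈1/δ⌉₊:ℕ))+1) := by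
    refine lower_bound ((w (k+⌈1/δ⌉₊))^2) ((w (k+⌈1/δ⌉₊+1))^2)
      (((w (k+⌈1/δ⌉₊) + w (k+⌈1/δ⌉₊+1))/2)^2) (u+(⌈1/δ⌉₊:ℕ)) (g+(⌈1/δ⌉₊:ℕ))
      (prodS _) ?_ (prodT _) ?_ (by linarith) (by linarith)
    · have := prodS (⌈1/δ⌉₊ + 1)
      push_cast at this ⊢
      rw [show k + (⌈1/δ⌉₊ + 1) = k + ⌈1/δ⌉₊ + 1 by ring] at this
      linarith [this]
    · nlinarith [sq_nonneg (w (k+⌈1/δ⌉₊) - w (k+⌈1/δ⌉₊+1))]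
  rw [show g = u + 1/2 - δ by linarith [hδ]] at hlow
  nlinarith [hδn, mul_pos hδpos hu_pos, hnnn, hδpos, hlow]



lemma e_norm (j : ℕ) : ‖e j‖ = 1 := by
  have := lp.norm_single (p := 2) (E := fun _ : ℕ => ℂ) (by norm_num) j (1:ℂ)
  simpa [e] using this

lemma e_orthonormal : Orthonormal ℂ e := by
  rw [orthonormal_iff_ite]
  intro i j
  simp [e, lp.inner_single_left, lp.single_apply, Pi.single_apply, eq_comm]

lemma e_dense : ∀ f : Ell2, f ∈ closure ((Submodule.span ℂ (Set.range e) : Submodule ℂ Ell2) : Set Ell2) := by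
  intro f
  have hsum : HasSum (fun i : ℕ => lp.single 2 i (f i)) f :=
    lp.hasSum_single ENNReal.ofNat_ne_top f
  refine mem_closure_of_tendsto hsum ?_
  filter_upwards with s
  refine Submodule.sum_mem _ fun i _ => ?_
  have : lp.single (E := fun _ : ℕ => ℂ) 2 i (f i) = f i • e i := by
    rw [e, ← lp.single_smul]
    norm_num
  rw [this]
  exact Submodule.smul_mem _ _ (Submodule.subset_span ⟨i, rfl⟩)

lemma clm_ext {S₁ S₂ : Ell2 →L[ℂ] Ell2} (h : ∀ j, S₁ (e j) = S₂ (e j)) : S₁ = S₂ := by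
  refine ContinuousLinearMap.ext fun x => ?_
  have hx := e_dense x
  have hcl : IsClosed {y : Ell2 | S₁ y = S₂ y} :=
    isClosed_eq S₁.continuous S₂.continuous
  have hsp : ((Submodule.span ℂ (Set.range e) : Submodule ℂ Ell2) : Set Ell2) ⊆ {y | S₁ y = S₂ y} := by
    intro y hy
    induction hy using Submodule.span_induction with
    | mem z hz => obtain ⟨j, rfl⟩ := hz; exact h j
    | zero => simp
    | add a b _ _ ha hb =>
      simp only [Set.mem_setOf_eq] at ha hb ⊢
      simp [map_add, ha, hb]
    | smul c a _ ha =>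
      simp only [Set.mem_setOf_eq] at ha ⊢
      simp [map_smul, ha]
  exact hcl.closure_subset ((closure_mono hsp) hx)

lemma shift_isometry {T : Ell2 →L[ℂ] Ell2} (h : ∀ j, T (e j) = e (j+1)) (x : Ell2) :
    ‖T x‖ = ‖x‖ := by
  have hx := e_dense x
  have hcl : IsClosed {y : Ell2 | ‖T y‖ = ‖y‖} :=
    isClosed_eq (continuous_norm.comp T.continuous) continuous_norm
  have hon := e_orthonormal
  have hon' : Orthonormal ℂ (fun j => e (j+1)) :=
    hon.comp _ (add_left_injective 1)
  have hsp : ((Submodule.span ℂ (Set.range e) : Submodule ℂ Ell2) : Set Ell2) ⊆ {y | ‖T y‖ = ‖y‖} := by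
    intro y hy
    rw [SetLike.mem_coe, Finsupp.mem_span_range_iff_exists_finsupp] at hy
    obtain ⟨c, rfl⟩ := hy
    rw [Finsupp.sum] at *
    have hTy : T (∑ i ∈ c.support, c i • e i) = ∑ i ∈ c.support, c i • e (i+1) := by
      rw [map_sum]
      simp [map_smul, h]
    show ‖_‖ = ‖_‖
    rw [hTy]
    have h1 := hon.inner_sum (fun i => c i) (fun i => c i) c.support
    have h2 := hon'.inner_sum (fun i => c i) (fun i => c i) c.support
    have h4 : (‖∑ i ∈ c.support, c i • e (i+1)‖ : ℝ)^2 = (‖∑ i ∈ c.support, c i • e i‖ : ℝ)^2 := by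
      rw [InnerProductSpace.norm_sq_eq_re_inner (𝕜 := ℂ), InnerProductSpace.norm_sq_eq_re_inner (𝕜 := ℂ), h1, h2]
    have := norm_nonneg (∑ i ∈ c.support, c i • e (i+1))
    have := norm_nonneg (∑ i ∈ c.support, c i • e i)
    nlinarith [h4]
  exact hcl.closure_subset ((closure_mono hsp) hx)


lemma shift_norms {w : ℕ → ℝ} (hw : ∀ j, 0 < w j) {T : Ell2 →L[ℂ] Ell2}
    (hT : ∀ j, T (e j) = ((w j : ℝ) : ℂ) • e (j + 1)) :
    (∀ j, ‖T (e j)‖ = w j) ∧ (∀ j, ‖(T^2) (e j)‖ = w j * w (j+1)) := by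
  have hn1 : ∀ j, ‖T (e j)‖ = w j := by
    intro j
    rw [hT j, norm_smul, e_norm, mul_one]
    simp [Real.norm_eq_abs, abs_of_pos (hw j)]
  refine ⟨hn1, fun j => ?_⟩
  have h2 : (T^2) (e j) = ((w j * w (j+1) : ℝ) : ℂ) • e (j+2) := by
    rw [pow_succ, pow_one, ContinuousLinearMap.mul_apply, hT j, map_smul, hT (j+1),
      smul_smul]
    push_cast
    ring_nf
  rw [h2, norm_smul, e_norm, mul_one]
  simp only [Complex.norm_real, Real.norm_eq_abs, abs_mul]
  rw [abs_of_pos (hw j), abs_of_pos (hw (j+1))]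

lemma two_isometry_recurrence {w : ℕ → ℝ} (hw : ∀ j, 0 < w j) {T : Ell2 →L[ℂ] Ell2}
    (hT : ∀ j, T (e j) = ((w j : ℝ) : ℂ) • e (j + 1)) (h2T : IsMIsometry T 2) :
    ∀ j, (w (j+1))^2 * (w j)^2 - 2*(w j)^2 + 1 = 0 := by
  obtain ⟨hn1, hn2⟩ := shift_norms hw hT
  intro j
  have h := h2T (e j)
  rw [Finset.sum_range_succ, Finset.sum_range_succ, Finset.sum_range_one] at h
  simp only [pow_zero, pow_one, ContinuousLinearMap.one_apply, e_norm, Nat.choose_zero_right,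
    Nat.choose_one_right, Nat.choose_self, Nat.cast_one, Nat.cast_ofNat] at h
  rw [hn1 j, hn2 j] at h
  nlinarith [h]

/-- if a weighted shift `T` with positive weights `(a_j)` and its mean
transform `M(T)` (the weighted shift with weights `(a_j + a_{j+1})/2`) are both
`2`-isometries, then `T` is an isometry, i.e. `a_j = 1` for all `j`; in particular
`T = Δ(T) = M(T)`, where `Δ(T)` is the Aluthge transform (the weighted shift with weights
`√(a_j a_{j+1})`). -/
theorem two_isometry_with_two_isometric_mean_transform_is_isometry
    (w : ℕ → ℝ) (hw : ∀ j, 0 < w j)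
    (T D M : Ell2 →L[ℂ] Ell2)
    (hT : ∀ j, T (e j) = ((w j : ℝ) : ℂ) • e (j + 1))
    (hD : ∀ j, D (e j) = ((Real.sqrt (w j * w (j + 1)) : ℝ) : ℂ) • e (j + 1))
    (hM : ∀ j, M (e j) = (((w j + w (j + 1)) / 2 : ℝ) : ℂ) • e (j + 1))
    (h2T : IsMIsometry T 2) (h2M : IsMIsometry M 2) :
    (∀ x : Ell2, ‖T x‖ = ‖x‖) ∧ (∀ j, w j = 1) ∧ T = D ∧ T = M := by
  have hb : ∀ j, 0 < (fun j => (w j + w (j+1))/2) j := fun j => by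
    have := hw j; have := hw (j+1); dsimp; linarith
  have rT := two_isometry_recurrence hw hT h2T
  have rM := two_isometry_recurrence hb (T := M) (fun j => hM j) h2M
  have hone : ∀ j, w j = 1 := fun k => weights_eq_one w hw rT (fun j => rM j) k
  have hTe : ∀ j, T (e j) = e (j+1) := by
    intro j
    rw [hT j, hone j]
    simp
  refine ⟨shift_isometry hTe, hone, ?_, ?_⟩
  · refine clm_ext fun j => ?_
    rw [hTe j, hD j, hone j, hone (j+1)]
    simp
  · refine clm_ext fun j => ?_
    rw [hTe j, hM j, hone j, hone (j+1)]
    norm_num
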